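/- Let U_i be differentiable concave utilities and x ≥ 0 an allocation with ∑_j x_j ≤ B. Suppose there are prices p_i ∈ ℝ^k_{≥0} and dual variables λ_i > 0 satisfying: (i) ∂U_i/∂x_j (x) ≤ λ_i p_{ij} for all i, j, with equality when x_j > 0; (ii) ∑_j p_{ij} x_j = B/n for all i; (iii) ∑_i p_{ij} ≤ 1 for all j, with equality when x_j > 0. Then for every item j, ∑_i [∂U_i/∂x_j(x) / ∑_m x_m ∂U_i/∂x_m(x)] ≤ n/B, with equality when x_j > 0. -/

import Mathlib

/-- Price-free characterization of the Lindahl equilibrium: from prices and dual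
variables satisfying the equilibrium conditions, derive the condition
`∑_i ∂_j U_i(x) / (∑_m x_m ∂_m U_i(x)) ≤ n/B`, with equality when `x_j > 0`.
Here `dU i j` denotes `∂U_i/∂x_j` evaluated at `x`. -/
theorem stmt4 (n k : ℕ) (B : ℝ) (hB : 0 < B) (hn : 0 < n)
    (x : Fin k → ℝ) (hx : ∀ j, 0 ≤ x j) (hxB : ∑ j, x j ≤ B)
    (dU : Fin n → Fin k → ℝ) (p : Fin n → Fin k → ℝ) (lam : Fin n → ℝ)
    (hp : ∀ i j, 0 ≤ p i j) (hlam : ∀ i, 0 < lam i)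
    (hpos : ∀ i, 0 < ∑ m, x m * dU i m)
    (h1 : ∀ i j, dU i j ≤ lam i * p i j)
    (h1' : ∀ i j, 0 < x j → dU i j = lam i * p i j)
    (h2 : ∀ i, ∑ j, p i j * x j = B / n)
    (h3 : ∀ j, ∑ i, p i j ≤ 1)
    (h3' : ∀ j, 0 < x j → ∑ i, p i j = 1) :
    ∀ j, ∑ i, dU i j / (∑ m, x m * dU i m) ≤ (n : ℝ) / B ∧
      (0 < x j → ∑ i, dU i j / (∑ m, x m * dU i m) = (n : ℝ) / B) := by
  have hBn : (0:ℝ) < B / n := div_pos hB (by exact_mod_cast hn)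
  have key : ∀ i, ∑ m, x m * dU i m = lam i * (B / n) := by
    intro i
    have : ∑ m, x m * dU i m = ∑ m, lam i * (p i m * x m) := by
      apply Finset.sum_congr rfl
      intro m _
      rcases eq_or_lt_of_le (hx m) with h | h
      · rw [← h]; ring
      · rw [h1' i m h]; ring
    rw [this, ← Finset.mul_sum, h2 i]
  intro j
  have hle : ∀ i, dU i j / (∑ m, x m * dU i m) ≤ p i j * (n / B) := by
    intro i
    rw [key i]
    rw [div_le_iff₀ (mul_pos (hlam i) hBn)]
    calc dU i j ≤ lam i * p i j := h1 i j
      _ = p i j * (n / B) * (lam i * (B / n)) := by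
          field_simp
  have heq : ∀ i, 0 < x j → dU i j / (∑ m, x m * dU i m) = p i j * (n / B) := by
    intro i hj
    rw [key i, h1' i j hj, mul_div_mul_left _ _ (hlam i).ne',
      div_div_eq_mul_div, mul_div_assoc]
  constructor
  · calc ∑ i, dU i j / (∑ m, x m * dU i m) ≤ ∑ i, p i j * (n / B) :=
          Finset.sum_le_sum fun i _ => hle i
      _ = (∑ i, p i j) * (n / B) := by rw [Finset.sum_mul]
      _ ≤ 1 * (n / B) := by
          apply mul_le_mul_of_nonneg_right (h3 j) (by positivity)
      _ = n / B := one_mul _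
  · intro hj
    calc ∑ i, dU i j / (∑ m, x m * dU i m) = ∑ i, p i j * (n / B) :=
          Finset.sum_congr rfl fun i _ => heq i hj
      _ = (∑ i, p i j) * (n / B) := by rw [Finset.sum_mul]
      _ = n / B := by rw [h3' j hj, one_mul]
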